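/- For 1 < q < ∞, if h is analytic on the unit disc and H(z) = (1/z)∫_0^z h(ζ) dζ (with H(0) = h(0)), then ‖H‖_{H^q} ≤ ‖h‖_{H^q}. -/

import Mathlib

open MeasureTheory Complex Filter Topology Real
open scoped ENNReal

noncomputable section

/-- The open unit disc in `ℂ`. -/
def unitDisc : Set ℂ := Metric.ball 0 1

/-- `f` is analytic (holomorphic) on the unit disc. -/
def AnalyticOnDisc (f : ℂ → ℂ) : Prop := DifferentiableOn ℂ f unitDisc

/-- The point `r e^{iθ}`. -/
def circlePoint (r θ : ℝ) : ℂ := (r : ℂ) * Complex.exp (θ * Complex.I)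

/-- The `p`-th integral mean `M_p(f,r)` (with normalized measure on the circle). -/
def intMean (p : ℝ) (f : ℂ → ℂ) (r : ℝ) : ℝ :=
  ((2 * π)⁻¹ * ∫ θ in (0:ℝ)..(2 * π), ‖f (circlePoint r θ)‖ ^ p) ^ p⁻¹

/-- The Hardy space norm `‖f‖_{H^p} = sup_{0 ≤ r < 1} M_p(f,r)`. -/
def hardyNorm (p : ℝ) (f : ℂ → ℂ) : ℝ := sSup (intMean p f '' Set.Ico 0 1)

/-- Extended-real-valued Hardy norm. -/
def eHardyNorm (p : ℝ) (f : ℂ → ℂ) : ℝ≥0∞ :=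
  ⨆ r ∈ Set.Ico (0:ℝ) 1, ENNReal.ofReal (intMean p f r)

/-- Membership in the Hardy space `H^p`: analytic with bounded integral means. -/
def MemHardy (p : ℝ) (f : ℂ → ℂ) : Prop :=
  AnalyticOnDisc f ∧ BddAbove (intMean p f '' Set.Ico 0 1)

/-- Normalized area measure `σ` on the unit disc, `σ(𝔻) = 1`. -/
def areaMeasure : Measure ℂ := (ENNReal.ofReal π)⁻¹ • (volume.restrict unitDisc)

/-- The Bergman space norm `‖f‖_{A^p}`. -/
def bergmanNorm (p : ℝ) (f : ℂ → ℂ) : ℝ := (∫ z, ‖f z‖ ^ p ∂areaMeasure) ^ p⁻¹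

/-- Membership in the Bergman space `A^p`. -/
def MemBergman (p : ℝ) (f : ℂ → ℂ) : Prop :=
  AnalyticOnDisc f ∧ Integrable (fun z => ‖f z‖ ^ p) areaMeasure

/-- The pairing `φ(f) = ∫_𝔻 f conj(k) dσ` of a kernel `k` with `f`. -/
def pairing (k f : ℂ → ℂ) : ℂ := ∫ z, f z * (starRingEnd ℂ) (k z) ∂areaMeasure

/-- The norm of the functional on `A^p` with kernel `k`. -/
def opNorm (p : ℝ) (k : ℂ → ℂ) : ℝ :=
  sSup ((fun f => (pairing k f).re) '' {f | MemBergman p f ∧ bergmanNorm p f ≤ 1})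

/-- `F` is the extremal function for the kernel `k` in `A^p`. -/
def IsExtremal (p : ℝ) (k F : ℂ → ℂ) : Prop :=
  MemBergman p F ∧ bergmanNorm p F = 1 ∧ (pairing k F).re = opNorm p k

/-- The kernel is not identically zero on the disc. -/
def NontrivialOnDisc (k : ℂ → ℂ) : Prop := ∃ z ∈ unitDisc, k z ≠ 0

/-- `sgn w = w/|w|`, `sgn 0 = 0`. -/
def csgn (w : ℂ) : ℂ := if w = 0 then 0 else w / (‖w‖ : ℂ)

/-- `K(z) = (1/z) ∫_0^z k(ζ) dζ = ∫_0^1 k(tz) dt`. -/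
def Kfun (k : ℂ → ℂ) (z : ℂ) : ℂ := ∫ t in (0:ℝ)..1, k ((t : ℂ) * z)



/-- Jensen's inequality for `x ↦ x^q` on `[0,1]`. -/
lemma jensen_rpow_aux (q : ℝ) (hq : 1 ≤ q) (f : ℝ → ℝ)
    (hf : ContinuousOn f (Set.Icc 0 1)) (hf0 : ∀ x, 0 ≤ f x) :
    (∫ t in (0:ℝ)..1, f t) ^ q ≤ ∫ t in (0:ℝ)..1, f t ^ q := by
  haveI hμ : IsProbabilityMeasure (volume.restrict (Set.Ioc (0:ℝ) 1)) := by
    constructor; simp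
  have hcq : ContinuousOn (fun x : ℝ => x ^ q) (Set.Ici 0) := fun x _ =>
    (Real.continuousAt_rpow_const x q (Or.inr (by linarith))).continuousWithinAt
  have hfi : IntegrableOn f (Set.Ioc (0:ℝ) 1) :=
    (hf.integrableOn_Icc).mono_set Set.Ioc_subset_Icc_self
  have hfqi : IntegrableOn (fun t => f t ^ q) (Set.Ioc (0:ℝ) 1) :=
    ((hf.rpow_const (fun x _ => Or.inr (by linarith))).integrableOn_Icc).mono_set
      Set.Ioc_subset_Icc_self
  rw [intervalIntegral.integral_of_le zero_le_one,
    intervalIntegral.integral_of_le zero_le_one]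
  exact (convexOn_rpow hq).map_integral_le hcq isClosed_Ici
    (Filter.Eventually.of_forall fun x => hf0 x) hfi hfqi

lemma intMean_nonneg (p : ℝ) (f : ℂ → ℂ) (r : ℝ) : 0 ≤ intMean p f r := by
  apply Real.rpow_nonneg
  apply mul_nonneg (by positivity)
  apply intervalIntegral.integral_nonneg (by positivity)
  intro x _
  exact Real.rpow_nonneg (norm_nonneg _) _

/-- If `h` is analytic on the disc and `H(z) = (1/z)∫_0^z h(ζ)dζ` (radial integral,
so `H(z) = ∫_0^1 h(tz) dt`), then `‖H‖_{H^q} ≤ ‖h‖_{H^q}` for `1 < q < ∞`. -/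
theorem averaged_antiderivative_norm_bound (q : ℝ) (hq : 1 < q)
    (h : ℂ → ℂ) (hh : AnalyticOnDisc h) :
    eHardyNorm q (fun z => ∫ t in (0:ℝ)..1, h ((t:ℂ) * z)) ≤ eHardyNorm q h := by
  have hq0 : (0:ℝ) < q := lt_trans one_pos hq
  have hqne : q ≠ 0 := ne_of_gt hq0
  have hπ : (0:ℝ) < π := Real.pi_pos
  rw [eHardyNorm, eHardyNorm]
  refine iSup₂_le fun r hr => ?_
  obtain ⟨hr0, hr1⟩ := hr
  by_cases hT : (⨆ s ∈ Set.Ico (0:ℝ) 1, ENNReal.ofReal (intMean q h s)) = ⊤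
  · rw [hT]; exact le_top
  set T := ⨆ s ∈ Set.Ico (0:ℝ) 1, ENNReal.ofReal (intMean q h s) with hTdef
  set C := T.toReal with hCdef
  have hC0 : 0 ≤ C := ENNReal.toReal_nonneg
  have hCb : ∀ s ∈ Set.Ico (0:ℝ) 1, intMean q h s ≤ C := by
    intro s hs
    have h1 : ENNReal.ofReal (intMean q h s) ≤ T :=
      le_iSup₂ (f := fun s (_ : s ∈ Set.Ico (0:ℝ) 1) => ENNReal.ofReal (intMean q h s)) s hs
    have h2 := ENNReal.toReal_mono hT h1
    rwa [ENNReal.toReal_ofReal (intMean_nonneg q h s)] at h2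
  -- continuity of h on the closed ball of radius r
  have hcont : ContinuousOn h (Metric.closedBall (0:ℂ) r) :=
    hh.continuousOn.mono (Metric.closedBall_subset_ball hr1)
  -- the map (θ, t) ↦ t * circlePoint r θ
  have hwnorm : ∀ θ : ℝ, ‖circlePoint r θ‖ = r := by
    intro θ
    simp [circlePoint, Complex.norm_exp_ofReal_mul_I, _root_.abs_of_nonneg hr0]
  have hw : ∀ (θ t : ℝ), t ∈ Set.Icc (0:ℝ) 1 →
      (t:ℂ) * circlePoint r θ ∈ Metric.closedBall (0:ℂ) r := by
    intro θ t ht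
    rw [Metric.mem_closedBall, dist_zero_right, norm_mul, Complex.norm_real,
      Real.norm_eq_abs, _root_.abs_of_nonneg ht.1, hwnorm]
    nlinarith [ht.1, ht.2]
  have hm : Continuous (fun p : ℝ × ℝ => (p.2:ℂ) * circlePoint r p.1) := by
    unfold circlePoint
    fun_prop
  have hFc : ContinuousOn (fun p : ℝ × ℝ => ‖h ((p.2:ℂ) * circlePoint r p.1)‖ ^ q)
      (Set.Icc 0 (2*π) ×ˢ Set.Icc 0 1) := by
    refine ContinuousOn.rpow_const ?_ (fun x _ => Or.inr hq0.le)
    refine (hcont.comp (hm.continuousOn) ?_).norm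
    rintro ⟨θ, t⟩ ⟨_, ht⟩
    exact hw θ t ht
  have hFint : Integrable (Function.uncurry fun θ t : ℝ => ‖h ((t:ℂ) * circlePoint r θ)‖ ^ q)
      ((volume.restrict (Set.Ioc 0 (2*π))).prod (volume.restrict (Set.Ioc (0:ℝ) 1))) := by
    rw [Measure.prod_restrict]
    have h1 : IntegrableOn (fun p : ℝ × ℝ => ‖h ((p.2:ℂ) * circlePoint r p.1)‖ ^ q)
        (Set.Icc 0 (2*π) ×ˢ Set.Icc (0:ℝ) 1) volume := by
      rw [Measure.volume_eq_prod]
      exact hFc.integrableOn_compact (isCompact_Icc.prod isCompact_Icc)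
    rw [← Measure.volume_eq_prod]
    exact h1.mono_set (Set.prod_mono Set.Ioc_subset_Icc_self Set.Ioc_subset_Icc_self)
  -- Step 1 : pointwise Jensen
  have step1 : ∀ θ ∈ Set.Icc (0:ℝ) (2*π),
      ‖∫ t in (0:ℝ)..1, h ((t:ℂ) * circlePoint r θ)‖ ^ q ≤
        ∫ t in (0:ℝ)..1, ‖h ((t:ℂ) * circlePoint r θ)‖ ^ q := by
    intro θ _
    have hc : ContinuousOn (fun t : ℝ => h ((t:ℂ) * circlePoint r θ)) (Set.Icc 0 1) := by
      refine hcont.comp (by fun_prop) ?_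
      intro t ht
      exact hw θ t ht
    have h1 : ‖∫ t in (0:ℝ)..1, h ((t:ℂ) * circlePoint r θ)‖ ≤
        ∫ t in (0:ℝ)..1, ‖h ((t:ℂ) * circlePoint r θ)‖ :=
      intervalIntegral.norm_integral_le_integral_norm zero_le_one
    calc ‖∫ t in (0:ℝ)..1, h ((t:ℂ) * circlePoint r θ)‖ ^ q
        ≤ (∫ t in (0:ℝ)..1, ‖h ((t:ℂ) * circlePoint r θ)‖) ^ q :=
          Real.rpow_le_rpow (norm_nonneg _) h1 hq0.le
      _ ≤ ∫ t in (0:ℝ)..1, ‖h ((t:ℂ) * circlePoint r θ)‖ ^ q :=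
          jensen_rpow_aux q hq.le _ hc.norm (fun _ => norm_nonneg _)
  -- Step 3 : inner bound for each t
  have step3 : ∀ t ∈ Set.Ioc (0:ℝ) 1,
      (∫ θ in Set.Ioc 0 (2*π), ‖h ((t:ℂ) * circlePoint r θ)‖ ^ q) ≤ 2*π*C^q := by
    intro t ht
    have htr : t*r ∈ Set.Ico (0:ℝ) 1 :=
      ⟨mul_nonneg ht.1.le hr0, lt_of_le_of_lt (by nlinarith [ht.1.le, ht.2]) hr1⟩
    have hb := hCb (t*r) htr
    have hX : 0 ≤ (2*π)⁻¹ * ∫ θ in (0:ℝ)..2*π, ‖h (circlePoint (t*r) θ)‖ ^ q := by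
      apply mul_nonneg (by positivity)
      apply intervalIntegral.integral_nonneg (by positivity)
      intro x _
      exact Real.rpow_nonneg (norm_nonneg _) _
    have h2 : (2*π)⁻¹ * (∫ θ in (0:ℝ)..2*π, ‖h (circlePoint (t*r) θ)‖ ^ q) ≤ C^q := by
      have h3 := Real.rpow_le_rpow (intMean_nonneg q h (t*r)) hb hq0.le
      unfold intMean at h3
      rwa [Real.rpow_inv_rpow hX hqne] at h3
    have heq : ∀ θ : ℝ, circlePoint (t*r) θ = (t:ℂ) * circlePoint r θ := by
      intro θ
      unfold circlePoint
      push_cast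
      ring
    have h4 : (∫ θ in Set.Ioc 0 (2*π), ‖h ((t:ℂ) * circlePoint r θ)‖ ^ q) =
        ∫ θ in (0:ℝ)..2*π, ‖h (circlePoint (t*r) θ)‖ ^ q := by
      rw [intervalIntegral.integral_of_le (by positivity)]
      simp only [heq]
    rw [h4, ← inv_mul_le_iff₀ (by positivity)]
    exact h2
  -- Fubini
  have swap : (∫ θ in Set.Ioc 0 (2*π), ∫ t in Set.Ioc (0:ℝ) 1,
        ‖h ((t:ℂ) * circlePoint r θ)‖ ^ q) =
      ∫ t in Set.Ioc (0:ℝ) 1, ∫ θ in Set.Ioc 0 (2*π),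
        ‖h ((t:ℂ) * circlePoint r θ)‖ ^ q :=
    integral_integral_swap hFint
  -- Step 4 : bound the swapped integral
  have hIntInner : IntegrableOn (fun t : ℝ => ∫ θ in Set.Ioc 0 (2*π),
      ‖h ((t:ℂ) * circlePoint r θ)‖ ^ q) (Set.Ioc (0:ℝ) 1) volume :=
    hFint.integral_prod_right
  have step4 : (∫ t in Set.Ioc (0:ℝ) 1, ∫ θ in Set.Ioc 0 (2*π),
      ‖h ((t:ℂ) * circlePoint r θ)‖ ^ q) ≤ 2*π*C^q := by
    calc (∫ t in Set.Ioc (0:ℝ) 1, ∫ θ in Set.Ioc 0 (2*π),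
          ‖h ((t:ℂ) * circlePoint r θ)‖ ^ q)
        ≤ ∫ _t in Set.Ioc (0:ℝ) 1, 2*π*C^q := by
          refine setIntegral_mono_on hIntInner ?_ measurableSet_Ioc step3
          exact integrableOn_const (by simp) enorm_ne_top
      _ = 2*π*C^q := by simp
  -- assemble: bound on the θ-integral of ‖H‖^q
  have main2 : (∫ θ in (0:ℝ)..2*π,
      ‖∫ t in (0:ℝ)..1, h ((t:ℂ) * circlePoint r θ)‖ ^ q) ≤ 2*π*C^q := by
    by_cases hInt : IntervalIntegrable
        (fun θ => ‖∫ t in (0:ℝ)..1, h ((t:ℂ) * circlePoint r θ)‖ ^ q) volume 0 (2*π)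
    · have hInt2 : IntervalIntegrable
          (fun θ => ∫ t in (0:ℝ)..1, ‖h ((t:ℂ) * circlePoint r θ)‖ ^ q) volume 0 (2*π) := by
        rw [intervalIntegrable_iff_integrableOn_Ioc_of_le (by positivity)]
        have h5 : IntegrableOn (fun θ : ℝ => ∫ t in Set.Ioc (0:ℝ) 1,
            ‖h ((t:ℂ) * circlePoint r θ)‖ ^ q) (Set.Ioc 0 (2*π)) volume :=
          hFint.integral_prod_left
        refine h5.congr_fun ?_ measurableSet_Ioc
        intro θ _
        exact (intervalIntegral.integral_of_le zero_le_one).symm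
      calc (∫ θ in (0:ℝ)..2*π, ‖∫ t in (0:ℝ)..1, h ((t:ℂ) * circlePoint r θ)‖ ^ q)
          ≤ ∫ θ in (0:ℝ)..2*π, ∫ t in (0:ℝ)..1, ‖h ((t:ℂ) * circlePoint r θ)‖ ^ q :=
            intervalIntegral.integral_mono_on (by positivity) hInt hInt2 step1
        _ = ∫ θ in Set.Ioc 0 (2*π), ∫ t in Set.Ioc (0:ℝ) 1,
              ‖h ((t:ℂ) * circlePoint r θ)‖ ^ q := by
            rw [intervalIntegral.integral_of_le (by positivity)]
            refine setIntegral_congr_fun measurableSet_Ioc fun θ _ => ?_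
            rw [intervalIntegral.integral_of_le zero_le_one]
        _ = _ := swap
        _ ≤ 2*π*C^q := step4
    · rw [intervalIntegral.integral_undef hInt]
      positivity
  -- conclude
  have hfinal : intMean q (fun z => ∫ t in (0:ℝ)..1, h ((t:ℂ) * z)) r ≤ C := by
    unfold intMean
    simp only
    have hX : 0 ≤ (2*π)⁻¹ * ∫ θ in (0:ℝ)..2*π,
        ‖∫ t in (0:ℝ)..1, h ((t:ℂ) * circlePoint r θ)‖ ^ q := by
      apply mul_nonneg (by positivity)
      apply intervalIntegral.integral_nonneg (by positivity)
      intro x _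
      exact Real.rpow_nonneg (norm_nonneg _) _
    have h6 : (2*π)⁻¹ * (∫ θ in (0:ℝ)..2*π,
        ‖∫ t in (0:ℝ)..1, h ((t:ℂ) * circlePoint r θ)‖ ^ q) ≤ C^q := by
      rw [inv_mul_le_iff₀ (by positivity)]
      calc (∫ θ in (0:ℝ)..2*π, ‖∫ t in (0:ℝ)..1, h ((t:ℂ) * circlePoint r θ)‖ ^ q)
          ≤ 2*π*C^q := main2
        _ = 2*π*(C^q) := by ring
    calc ((2*π)⁻¹ * ∫ θ in (0:ℝ)..2*π,
          ‖∫ t in (0:ℝ)..1, h ((t:ℂ) * circlePoint r θ)‖ ^ q) ^ q⁻¹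
        ≤ (C^q) ^ q⁻¹ := Real.rpow_le_rpow hX h6 (by positivity)
      _ = C := Real.rpow_rpow_inv hC0 hqne
  calc ENNReal.ofReal (intMean q (fun z => ∫ t in (0:ℝ)..1, h ((t:ℂ) * z)) r)
      ≤ ENNReal.ofReal C := ENNReal.ofReal_le_ofReal hfinal
    _ = T := ENNReal.ofReal_toReal hT

end
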